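/- The upper central series of the group U_2 of unitriangular automorphisms of A_2 = K⟨x,y⟩ has length exactly ω + 1: (i) Z_k(U_2) is a proper subgroup of Z_{k+1}(U_2) for every non-negative integer k; (ii) the union Z_ω(U_2) = ⋃_{k≥0} Z_k(U_2) is a proper subgroup of U_2; and (iii) for all g, h ∈ U_2 the commutator [g,h] lies in Z_ω(U_2), so the (ω+1)-st hypercenter Z_{ω+1}(U_2) = { g ∈ U_2 : [g,h] ∈ Z_ω(U_2) for all h ∈ U_2 } is all of U_2. -/

import Mathlib

/- STATEMENT 9: the upper central series of U₂ has length exactly ω + 1: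
   (i) each finite term is strictly contained in the next;
   (ii) the union Z_ω(U₂) of the finite terms is a proper subgroup of U₂;
   (iii) every commutator lies in Z_ω(U₂), so Z_{ω+1}(U₂) = U₂. -/

noncomputable section
open FreeAlgebra
open scoped commutatorElement

abbrev A2 (K : Type) [Field K] := FreeAlgebra K (Fin 2)

private lemma adjoin_stable {K : Type} [Field K]
    (φ : A2 K ≃ₐ[K] A2 K) (b : K)
    (hy : φ (ι K 1) = ι K 1 + algebraMap K (A2 K) b) :
    ∀ u ∈ Algebra.adjoin K ({ι K 1} : Set (A2 K)),
      φ u ∈ Algebra.adjoin K ({ι K 1} : Set (A2 K)) := by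
  intro u hu
  induction hu using Algebra.adjoin_induction with
  | mem v hv =>
      rcases hv with rfl
      rw [hy]
      exact add_mem (Algebra.self_mem_adjoin_singleton K _) (Subalgebra.algebraMap_mem _ _)
  | algebraMap r => rw [AlgEquiv.commutes]; exact Subalgebra.algebraMap_mem _ _
  | add u v _ _ hu hv => rw [map_add]; exact add_mem hu hv
  | mul u v _ _ hu hv => rw [map_mul]; exact mul_mem hu hv

/-- The group `U₂` of unitriangular automorphisms of the free associative algebra
`A₂ = K⟨x,y⟩` (with `x = ι K 0`, `y = ι K 1`): automorphisms sending
`x ↦ x + f(y)`, `y ↦ y + b·1` with `f ∈ K⟨y⟩`, `b ∈ K`. -/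
def U2 (K : Type) [Field K] : Subgroup (A2 K ≃ₐ[K] A2 K) where
  carrier := {φ | ∃ f ∈ Algebra.adjoin K ({ι K 1} : Set (A2 K)), ∃ b : K,
    φ (ι K 0) = ι K 0 + f ∧ φ (ι K 1) = ι K 1 + algebraMap K (A2 K) b}
  one_mem' := ⟨0, Subalgebra.zero_mem _, 0, by simp, by simp⟩
  mul_mem' := by
    rintro φ ψ ⟨f, hf, b, hfx, hfy⟩ ⟨h, hh, c, hhx, hhy⟩
    refine ⟨f + φ h, add_mem hf (adjoin_stable φ b hfy h hh), b + c, ?_, ?_⟩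
    · show φ (ψ (ι K 0)) = _
      rw [hhx, map_add, hfx, add_assoc]
    · show φ (ψ (ι K 1)) = _
      rw [hhy, map_add, hfy, AlgEquiv.commutes, map_add, add_assoc]
  inv_mem' := by
    rintro φ ⟨f, hf, b, hfx, hfy⟩
    have hsy : φ.symm (ι K 1) = ι K 1 + algebraMap K (A2 K) (-b) := by
      have h1 := congrArg φ.symm hfy
      rw [AlgEquiv.symm_apply_apply, map_add, AlgEquiv.commutes] at h1
      rw [eq_sub_of_add_eq h1.symm, map_neg, sub_eq_add_neg]
    have hsx : φ.symm (ι K 0) = ι K 0 + (-(φ.symm f)) := by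
      have h1 := congrArg φ.symm hfx
      rw [AlgEquiv.symm_apply_apply, map_add] at h1
      rw [eq_sub_of_add_eq h1.symm, sub_eq_add_neg]
    exact ⟨-(φ.symm f), neg_mem (adjoin_stable φ.symm (-b) hsy f hf), -b, hsx, hsy⟩


/-! ### A concrete model of `U₂`

`U₂` is isomorphic to the group `UT K` of pairs `(p, b) : K[X] × K`, with
multiplication `(p, b) * (q, c) = (p + taylor b q, b + c)`, corresponding to the
automorphism `x ↦ x + p(y), y ↦ y + b`. -/

open Polynomial in
/-- The model group of unitriangular automorphisms: pairs `(p, b)`. -/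
@[ext] structure UT (K : Type) [Field K] where
  p : Polynomial K
  b : K

namespace UT
open Polynomial
variable {K : Type} [Field K]

instance : Mul (UT K) := ⟨fun q r => ⟨q.p + taylor q.b r.p, q.b + r.b⟩⟩
instance : One (UT K) := ⟨⟨0, 0⟩⟩
instance : Inv (UT K) := ⟨fun q => ⟨-taylor (-q.b) q.p, -q.b⟩⟩

@[simp] lemma mul_p (q r : UT K) : (q * r).p = q.p + taylor q.b r.p := rfl
@[simp] lemma mul_b (q r : UT K) : (q * r).b = q.b + r.b := rfl
@[simp] lemma one_p : (1 : UT K).p = 0 := rfl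
@[simp] lemma one_b : (1 : UT K).b = 0 := rfl
@[simp] lemma inv_p (q : UT K) : (q⁻¹).p = -taylor (-q.b) q.p := rfl
@[simp] lemma inv_b (q : UT K) : (q⁻¹).b = -q.b := rfl

instance : Group (UT K) where
  mul_assoc a b c := by
    refine UT.ext ?_ ?_
    · show (a.p + taylor a.b b.p) + taylor (a.b + b.b) c.p
        = a.p + taylor a.b (b.p + taylor b.b c.p)
      rw [map_add, taylor_taylor, add_assoc]
    · show (a.b + b.b) + c.b = a.b + (b.b + c.b)
      ring
  one_mul a := by refine UT.ext ?_ ?_ <;> simp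
  mul_one a := by refine UT.ext ?_ ?_ <;> simp
  inv_mul_cancel a := by refine UT.ext ?_ ?_ <;> simp

lemma comm_b (a y : UT K) : (⁅a, y⁆ : UT K).b = 0 := by
  rw [commutatorElement_def]
  simp only [mul_b, inv_b]
  ring

lemma comm_p (a y : UT K) :
    (⁅a, y⁆ : UT K).p = a.p + taylor a.b y.p - taylor y.b a.p - y.p := by
  rw [commutatorElement_def]
  simp only [mul_p, mul_b, inv_p, inv_b, map_neg, taylor_taylor]
  rw [show a.b + y.b + -a.b = y.b by ring,
      show y.b + -y.b = 0 by ring, taylor_zero]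
  ring

end UT

section PolyLemmas
open Polynomial
variable {K : Type} [Field K]

/-- If all coefficients of `f` above `m` vanish, the `m`-th Hasse derivative is constant. -/
lemma hasseDeriv_eq_C {f : K[X]} {m : ℕ} (h : ∀ j, m < j → f.coeff j = 0) :
    hasseDeriv m f = C (f.coeff m) := by
  ext j
  rw [hasseDeriv_coeff]
  match j with
  | 0 => simp
  | j + 1 =>
      rw [h (j + 1 + m) (by omega), coeff_C, if_neg (by omega)]
      ring

/-- Downward step: shifting drops degree. -/
lemma degree_sub_taylor_lt {f : K[X]} {k : ℕ} (hdeg : f.degree < (k + 1 : ℕ)) (c : K) :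
    (f - taylor c f).degree < (k : ℕ) := by
  rw [degree_lt_iff_coeff_zero] at hdeg ⊢
  intro m hm
  rw [coeff_sub, taylor_coeff, hasseDeriv_eq_C (fun j hj => hdeg j (by omega)),
    eval_C, sub_self]

/-- The key coefficient computation: the coefficient of `X^(n-1)` in `taylor c f - f`. -/
lemma taylor_sub_coeff (f : K[X]) (hf : 1 ≤ f.natDegree) (c : K) :
    (taylor c f - f).coeff (f.natDegree - 1)
      = (f.natDegree : K) * f.leadingCoeff * c := by
  set n := f.natDegree with hn
  have h2 : hasseDeriv (n - 1) f = C (f.coeff (n - 1)) + C ((n : K) * f.leadingCoeff) * X := by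
    ext j
    rw [hasseDeriv_coeff]
    match j with
    | 0 => simp
    | 1 =>
        have e1 : 1 + (n - 1) = n := by omega
        have e2 : (1 + (n - 1)).choose (n - 1) = n := by
          rw [show 1 + (n - 1) = (n - 1) + 1 by omega, Nat.choose_succ_self_right]
          omega
        rw [e2, e1, coeff_natDegree]
        simp [coeff_C]
    | j + 2 =>
        rw [coeff_eq_zero_of_natDegree_lt (show n < j + 2 + (n - 1) by omega)]
        simp [coeff_C, coeff_X]
  rw [coeff_sub, taylor_coeff, h2]
  simp only [eval_add, eval_mul, eval_C, eval_X]
  ring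

end PolyLemmas

namespace UT
open Polynomial
variable {K : Type} [Field K]

/-- Characterization of the upper central series of the model group `UT K`:
the `k`-th term consists of the pairs `(p, 0)` with `deg p < k`. -/
lemma mem_ucs_iff [CharZero K] :
    ∀ (k : ℕ) (q : UT K),
      q ∈ upperCentralSeries (UT K) k ↔ q.b = 0 ∧ q.p.degree < (k : WithBot ℕ)
  | 0, q => by
    rw [_root_.upperCentralSeries, upperCentralSeries_zero, Subgroup.mem_bot]
    constructor
    · rintro rfl
      refine ⟨rfl, ?_⟩
      simp
    · rintro ⟨hb, hp⟩
      have hp0 : q.p = 0 := by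
        rw [Nat.cast_zero, Nat.WithBot.lt_zero_iff, degree_eq_bot] at hp
        exact hp
      exact UT.ext hp0 hb
  | k + 1, q => by
    rw [_root_.upperCentralSeries, mem_upperCentralSeries_succ_iff]
    constructor
    · intro h
      have key : ∀ y : UT K, (⁅q, y⁆ : UT K).p.degree < (k : WithBot ℕ) := by
        intro y
        have hy := h y
        exact ((mem_ucs_iff k _).mp hy).2
      have hb : q.b = 0 := by
        by_contra hb
        have h1 := key ⟨X ^ (k + 1), 0⟩
        have hp : (⁅q, (⟨X ^ (k + 1), 0⟩ : UT K)⁆ : UT K).p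
            = taylor q.b (X ^ (k + 1)) - X ^ (k + 1) := by
          rw [comm_p]
          simp only [taylor_zero]
          ring
        rw [hp] at h1
        have hc := coeff_eq_zero_of_degree_lt
          (lt_of_lt_of_le h1 (le_refl _))
        have hM := taylor_sub_coeff (X ^ (k + 1) : K[X]) (by simp) q.b
        simp only [natDegree_X_pow, leadingCoeff_X_pow, Nat.add_sub_cancel, one_mul] at hM
        rw [hM, mul_one] at hc
        have hk : ((k + 1 : ℕ) : K) ≠ 0 := Nat.cast_ne_zero.mpr (by omega)
        exact hb ((mul_eq_zero.mp hc).resolve_left hk)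
      refine ⟨hb, ?_⟩
      by_contra hd
      have hge : ((k + 1 : ℕ) : WithBot ℕ) ≤ q.p.degree := not_lt.mp (by exact_mod_cast hd)
      have hne : q.p ≠ 0 := by
        intro h0
        rw [h0, degree_zero] at hge
        exact absurd hge (by simp)
      have hnat : k + 1 ≤ q.p.natDegree := by
        rw [degree_eq_natDegree hne] at hge
        exact_mod_cast hge
      have h1 := key ⟨0, 1⟩
      have hp : (⁅q, (⟨0, 1⟩ : UT K)⁆ : UT K).p = q.p - taylor 1 q.p := by
        rw [comm_p]
        simp only [map_zero]
        ring
      rw [hp] at h1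
      have hlt : (q.p - taylor 1 q.p).degree < ((q.p.natDegree - 1 : ℕ) : WithBot ℕ) :=
        lt_of_lt_of_le h1 (by exact_mod_cast (show k ≤ q.p.natDegree - 1 by omega))
      have hc := coeff_eq_zero_of_degree_lt hlt
      have hM := taylor_sub_coeff q.p (by omega) 1
      rw [coeff_sub] at hc hM
      have h0 : (taylor 1 q.p).coeff (q.p.natDegree - 1)
          - q.p.coeff (q.p.natDegree - 1) = 0 := by
        rw [← neg_sub, hc, neg_zero]
      rw [h0, mul_one] at hM
      have hn0 : (q.p.natDegree : K) ≠ 0 := Nat.cast_ne_zero.mpr (by omega)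
      have hlc : q.p.leadingCoeff ≠ 0 := leadingCoeff_ne_zero.mpr hne
      exact hlc ((mul_eq_zero.mp hM.symm).resolve_left hn0)
    · rintro ⟨hb, hdeg⟩ y
      refine (mem_ucs_iff k _).mpr ?_
      refine ⟨comm_b q y, ?_⟩
      have hp : (⁅q, y⁆ : UT K).p = q.p - taylor y.b q.p := by
        rw [comm_p, hb, taylor_zero]
        ring
      rw [hp]
      exact degree_sub_taylor_lt (by exact_mod_cast hdeg) y.b

end UT

open Polynomial FreeAlgebra in
/-- The algebra endomorphism of `A₂` determined by `q : UT K`. -/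
def toA2 (K : Type) [Field K] (q : UT K) : A2 K →ₐ[K] A2 K :=
  FreeAlgebra.lift K ![ι K 0 + Polynomial.aeval (ι K 1) q.p,
    ι K 1 + algebraMap K (A2 K) q.b]

namespace UT
open Polynomial FreeAlgebra
variable {K : Type} [Field K]

@[simp] lemma toA2_x (q : UT K) :
    toA2 K q (ι K 0) = ι K 0 + Polynomial.aeval (ι K 1) q.p := by
  rw [toA2, lift_ι_apply]
  rfl

@[simp] lemma toA2_y (q : UT K) :
    toA2 K q (ι K 1) = ι K 1 + algebraMap K (A2 K) q.b := by
  rw [toA2, lift_ι_apply]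
  rfl

lemma aeval_shift (b : K) (g : K[X]) :
    Polynomial.aeval (ι K 1 + algebraMap K (A2 K) b) g
      = Polynomial.aeval ((ι K 1 : A2 K)) (taylor b g) := by
  rw [taylor_apply, aeval_comp]
  congr 1
  simp

lemma toA2_mul (q r : UT K) : (toA2 K q).comp (toA2 K r) = toA2 K (q * r) := by
  apply FreeAlgebra.hom_ext
  funext i
  fin_cases i
  · show toA2 K q (toA2 K r (ι K 0)) = toA2 K (q * r) (ι K 0)
    rw [toA2_x, map_add, toA2_x, ← Polynomial.aeval_algHom_apply, toA2_y, aeval_shift,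
      toA2_x, mul_p, map_add, add_assoc]
  · show toA2 K q (toA2 K r (ι K 1)) = toA2 K (q * r) (ι K 1)
    rw [toA2_y, map_add, toA2_y, AlgHom.commutes, toA2_y, mul_b, map_add, add_assoc]

lemma toA2_one : toA2 K (1 : UT K) = AlgHom.id K (A2 K) := by
  apply FreeAlgebra.hom_ext
  funext i
  fin_cases i
  · show toA2 K 1 (ι K 0) = ι K 0
    rw [toA2_x]
    simp
  · show toA2 K 1 (ι K 1) = ι K 1
    rw [toA2_y]
    simp

/-- The algebra automorphism of `A₂` determined by `q : UT K`. -/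
def toAut (q : UT K) : A2 K ≃ₐ[K] A2 K :=
  AlgEquiv.ofAlgHom (toA2 K q) (toA2 K q⁻¹)
    (by rw [toA2_mul, mul_inv_cancel, toA2_one])
    (by rw [toA2_mul, inv_mul_cancel, toA2_one])

@[simp] lemma toAut_apply (q : UT K) (x : A2 K) : toAut q x = toA2 K q x := rfl

lemma toAut_mul (q r : UT K) : toAut (q * r) = toAut q * toAut r := by
  apply AlgEquiv.ext
  intro x
  have := DFunLike.congr_fun (toA2_mul q r) x
  simpa using this.symm

/-- The retraction `A₂ → K[y]`, `x ↦ 0`, `y ↦ X`. -/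
def retr (K : Type) [Field K] : A2 K →ₐ[K] Polynomial K :=
  FreeAlgebra.lift K ![0, Polynomial.X]

lemma aeval_i1_injective :
    Function.Injective (fun p : K[X] => Polynomial.aeval ((ι K 1 : A2 K)) p) := by
  intro p q h
  have h2 := congrArg (retr K) h
  simp only at h2
  rw [← Polynomial.aeval_algHom_apply, ← Polynomial.aeval_algHom_apply] at h2
  have hy : retr K (ι K 1) = Polynomial.X := by
    rw [retr, lift_ι_apply]; rfl
  rwa [hy, Polynomial.aeval_X_left_apply, Polynomial.aeval_X_left_apply] at h2

lemma toAut_injective : Function.Injective (toAut : UT K → A2 K ≃ₐ[K] A2 K) := by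
  intro q r h
  have hx := DFunLike.congr_fun h (ι K 0)
  have hy := DFunLike.congr_fun h (ι K 1)
  simp only [toAut_apply, toA2_x, toA2_y] at hx hy
  refine UT.ext ?_ ?_
  · exact aeval_i1_injective (add_left_cancel hx)
  · have := add_left_cancel hy
    have h2 := congrArg (retr K) this
    rw [AlgHom.commutes, AlgHom.commutes] at h2
    exact Polynomial.C_injective h2

lemma toAut_mem (q : UT K) : toAut q ∈ U2 K := by
  refine ⟨Polynomial.aeval (ι K 1) q.p, ?_, q.b, ?_, ?_⟩
  · rw [Algebra.adjoin_singleton_eq_range_aeval]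
    exact ⟨q.p, rfl⟩
  · simp
  · simp

lemma toAut_surjective (φ : A2 K ≃ₐ[K] A2 K) (hφ : φ ∈ U2 K) : ∃ q : UT K, toAut q = φ := by
  obtain ⟨f, hf, b, hx, hy⟩ := hφ
  rw [Algebra.adjoin_singleton_eq_range_aeval] at hf
  obtain ⟨p, hp⟩ := hf
  refine ⟨⟨p, b⟩, ?_⟩
  have key : toA2 K ⟨p, b⟩ = (φ : A2 K →ₐ[K] A2 K) := by
    apply FreeAlgebra.hom_ext
    funext i
    fin_cases i
    · show toA2 K ⟨p, b⟩ (ι K 0) = φ (ι K 0)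
      rw [toA2_x, hx]
      exact congrArg _ hp
    · show toA2 K ⟨p, b⟩ (ι K 1) = φ (ι K 1)
      rw [toA2_y, hy]
  apply AlgEquiv.ext
  intro x
  have := DFunLike.congr_fun key x
  simpa using this

variable (K) in
/-- The monoid hom from the model group `UT K` into `U₂`. -/
def Psi : UT K →* ↥(U2 K) where
  toFun q := ⟨toAut q, toAut_mem q⟩
  map_one' := by
    refine Subtype.ext ?_
    show toAut (1 : UT K) = 1
    apply AlgEquiv.ext
    intro x
    have := DFunLike.congr_fun (toA2_one (K := K)) x
    simpa using this
  map_mul' q r := Subtype.ext (toAut_mul q r)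

lemma Psi_bijective : Function.Bijective (Psi K) := by
  constructor
  · intro a b h
    exact toAut_injective (congrArg Subtype.val h)
  · rintro ⟨φ, hφ⟩
    obtain ⟨q, hq⟩ := toAut_surjective φ hφ
    exact ⟨q, Subtype.ext hq⟩

variable (K) in
/-- The group isomorphism between the model group `UT K` and `U₂`. -/
def iso : UT K ≃* ↥(U2 K) := MulEquiv.ofBijective (Psi K) Psi_bijective

@[simp] lemma iso_apply (q : UT K) : (iso K q : A2 K ≃ₐ[K] A2 K) = toAut q := rfl

lemma mem_ucs_iso_iff [CharZero K] (k : ℕ) (q : UT K) :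
    iso K q ∈ upperCentralSeries ↥(U2 K) k ↔ q.b = 0 ∧ q.p.degree < (k : WithBot ℕ) :=
  calc iso K q ∈ upperCentralSeries ↥(U2 K) k
      ↔ q ∈ (upperCentralSeries ↥(U2 K) k).comap (iso K : UT K →* ↥(U2 K)) :=
        Iff.rfl
    _ ↔ q ∈ upperCentralSeries (UT K) k := by rw [_root_.upperCentralSeries, comap_upperCentralSeries]
    _ ↔ _ := mem_ucs_iff k q

end UT

open UT Polynomial in
theorem upper_central_series_length_U2 (K : Type) [Field K] [CharZero K] :
    (∀ k : ℕ, upperCentralSeries ↥(U2 K) k < upperCentralSeries ↥(U2 K) (k + 1)) ∧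
    (∃ g : U2 K, ∀ k : ℕ, g ∉ upperCentralSeries ↥(U2 K) k) ∧
    (∀ g h : U2 K, ∃ k : ℕ, ⁅g, h⁆ ∈ upperCentralSeries ↥(U2 K) k) := by
  refine ⟨?_, ?_, ?_⟩
  · -- (i) strict growth of the finite terms
    intro k
    rw [SetLike.lt_iff_le_and_exists]
    refine ⟨upperCentralSeries_mono _ (Nat.le_succ k), iso K ⟨X ^ k, 0⟩, ?_, ?_⟩
    · rw [mem_ucs_iso_iff]
      refine ⟨rfl, ?_⟩
      rw [degree_X_pow]
      exact_mod_cast Nat.lt_succ_self k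
    · rw [mem_ucs_iso_iff]
      rintro ⟨-, hdeg⟩
      rw [degree_X_pow] at hdeg
      exact absurd hdeg (lt_irrefl _)
  · -- (ii) the shift `y ↦ y + 1` is in no finite term
    refine ⟨iso K ⟨0, 1⟩, fun k hk => ?_⟩
    rcases (mem_ucs_iso_iff k _).mp hk with ⟨hb, -⟩
    exact one_ne_zero hb
  · -- (iii) every commutator lies in some finite term
    intro g h
    refine ⟨(⁅(iso K).symm g, (iso K).symm h⁆ : UT K).p.natDegree + 1, ?_⟩
    have e1 : ⁅g, h⁆ = iso K ⁅(iso K).symm g, (iso K).symm h⁆ := by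
      rw [map_commutatorElement]
      simp
    rw [e1, mem_ucs_iso_iff]
    refine ⟨comm_b _ _, lt_of_le_of_lt degree_le_natDegree ?_⟩
    exact_mod_cast Nat.lt_succ_self _
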